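/- Let k be an algebraically closed field and A a 1-Calabi-Yau k-linear abelian category. Then the endo-simple objects of A form a directed family: there is no cycle of nonzero non-isomorphisms among them. Precisely, for every n ≥ 1 there do not exist endo-simple objects S_0, S_1, …, S_{n-1} of A together with morphisms f_i : S_i → S_{i+1 (mod n)} for 0 ≤ i ≤ n−1 such that every f_i is nonzero and no f_i is an isomorphism. -/

import Mathlib

open CategoryTheory Limits

attribute [local instance] CategoryTheory.Abelian.hasFiniteBiproducts

universe w v u

section Preliminaries

variable {k : Type*} [Field k] {A : Type u} [Category.{v} A] [Abelian A]
  [CategoryTheory.Linear k A] [HasExt.{w} A]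

lemma Ext_mk₀_add {X Y : A} (f g : X ⟶ Y) :
    Abelian.Ext.mk₀ (f + g) = Abelian.Ext.mk₀ f + Abelian.Ext.mk₀ g := by
  letI := HasDerivedCategory.standard A
  apply Abelian.Ext.homAddEquiv.injective
  rw [map_add]
  simp only [Abelian.Ext.homAddEquiv_apply, Abelian.Ext.mk₀_hom]
  dsimp [ShiftedHom.mk₀]
  rw [Functor.map_add, Preadditive.add_comp]

/-- The `k`-vector space structure on the Ext-groups of a `k`-linear abelian category,
where a scalar `c : k` acts on an extension class by composition with `c • 𝟙 _`. -/
noncomputable instance extModule {X Y : A} {n : ℕ} : Module k (Abelian.Ext X Y n) where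
  smul c α := α.comp (Abelian.Ext.mk₀ (c • 𝟙 Y)) (add_zero n)
  one_smul α := by
    show α.comp (Abelian.Ext.mk₀ ((1 : k) • 𝟙 Y)) (add_zero n) = α
    rw [one_smul]; exact α.comp_mk₀_id
  mul_smul c c' α := by
    show α.comp (Abelian.Ext.mk₀ ((c * c') • 𝟙 Y)) (add_zero n)
      = (α.comp (Abelian.Ext.mk₀ (c' • 𝟙 Y)) (add_zero n)).comp
          (Abelian.Ext.mk₀ (c • 𝟙 Y)) (add_zero n)
    rw [Abelian.Ext.comp_assoc_of_third_deg_zero, Abelian.Ext.mk₀_comp_mk₀]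
    congr 2
    rw [Linear.smul_comp, Linear.comp_smul, Category.id_comp, smul_smul, mul_comm]
  smul_zero c := by
    show (0 : Abelian.Ext X Y n).comp _ _ = 0
    simp
  smul_add c α β := by
    show (α + β).comp _ _ = α.comp _ _ + β.comp _ _
    simp
  add_smul c c' α := by
    show α.comp (Abelian.Ext.mk₀ ((c + c') • 𝟙 Y)) (add_zero n)
      = α.comp (Abelian.Ext.mk₀ (c • 𝟙 Y)) (add_zero n)
        + α.comp (Abelian.Ext.mk₀ (c' • 𝟙 Y)) (add_zero n)
    rw [add_smul, Ext_mk₀_add, Abelian.Ext.comp_add]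
  zero_smul α := by
    show α.comp (Abelian.Ext.mk₀ ((0 : k) • 𝟙 Y)) (add_zero n) = 0
    rw [zero_smul, Abelian.Ext.mk₀_zero, Abelian.Ext.comp_zero]

variable (k) in
/-- An object `S` is *endo-simple* if the canonical map `k → End S`, `c ↦ c • 𝟙 S`,
is an isomorphism (equivalently, a bijection). -/
def EndoSimple (S : A) : Prop :=
  Function.Bijective (fun c : k => c • 𝟙 S)

variable (k A) in
/-- A `k`-linear abelian category `A` is *1-Calabi-Yau* if all Hom- and `Ext¹`-spaces are
finite-dimensional over `k`, all `Extⁱ` for `i ≥ 2` vanish (`A` is hereditary), and there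
are `k`-linear isomorphisms `Hom(X,Y) ≅ Ext¹(Y,X)*`, natural in `X` and `Y` (naturality being
expressed by compatibility with pre- and post-composition). -/
def IsOneCalabiYau : Prop :=
  (∀ X Y : A, FiniteDimensional k (X ⟶ Y)) ∧
  (∀ X Y : A, FiniteDimensional k (Abelian.Ext X Y 1)) ∧
  (∀ (X Y : A) (i : ℕ), 2 ≤ i → Subsingleton (Abelian.Ext X Y i)) ∧
  ∃ φ : ∀ X Y : A, (X ⟶ Y) ≃ₗ[k] Module.Dual k (Abelian.Ext Y X 1),
    (∀ ⦃X X' Y : A⦄ (f : X' ⟶ X) (u : X ⟶ Y) (e : Abelian.Ext Y X' 1),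
        φ X' Y (f ≫ u) e = φ X Y u (e.comp (Abelian.Ext.mk₀ f) (add_zero 1))) ∧
    (∀ ⦃X Y Y' : A⦄ (u : X ⟶ Y) (g : Y ⟶ Y') (e : Abelian.Ext Y' X 1),
        φ X Y' (u ≫ g) e = φ X Y u ((Abelian.Ext.mk₀ g).comp e (zero_add 1)))

/-- An object `X` of an abelian category is *indecomposable* if it is nonzero and in any
decomposition `X ≅ Y ⊞ Z` one of the two summands is zero. -/
def Indecomp (X : A) : Prop :=
  ¬ IsZero X ∧ ∀ Y Z : A, (X ≅ Y ⊞ Z) → (IsZero Y ∨ IsZero Z)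

end Preliminaries

section Aux

variable {k : Type*} [Field k] {A : Type u} [Category.{v} A] [Abelian A]
  [CategoryTheory.Linear k A] [HasExt.{w} A]

lemma EndoSimple.exists_smul {S : A} (hS : EndoSimple k S) (e : S ⟶ S) :
    ∃ c : k, e = c • 𝟙 S := by
  obtain ⟨c, hc⟩ := hS.2 e
  exact ⟨c, hc.symm⟩

lemma EndoSimple.id_ne_zero {S : A} (hS : EndoSimple k S) : 𝟙 S ≠ 0 := by
  intro h
  have h2 : (fun c : k => c • 𝟙 S) 1 = (fun c : k => c • 𝟙 S) 0 := by
    simp [h]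
  exact one_ne_zero (hS.1 h2)

/-- If `u ≫ r = 𝟙` between endo-simple objects, then both `u` and `r` are isomorphisms. -/
lemma isIso_of_comp_eq_id {S T : A} (hS : EndoSimple k S) (hT : EndoSimple k T)
    {u : S ⟶ T} {r : T ⟶ S} (h : u ≫ r = 𝟙 S) : IsIso u ∧ IsIso r := by
  obtain ⟨d, hd⟩ := hT.exists_smul (r ≫ u)
  have hu0 : u ≠ 0 := by
    rintro rfl
    rw [zero_comp] at h
    exact hS.id_ne_zero h.symm
  have h1 : u ≫ (r ≫ u) = u := by rw [← Category.assoc, h, Category.id_comp]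
  have h2 : d • u = u := by
    rw [hd, Linear.comp_smul, Category.comp_id] at h1
    exact h1
  have hd1 : d = 1 := by
    by_contra hd1
    apply hu0
    have h3 : (d - 1) • u = 0 := by
      rw [sub_smul, one_smul, h2, sub_self]
    have h4 := congrArg (fun x => (d - 1)⁻¹ • x) h3
    simpa [smul_smul, inv_mul_cancel₀ (sub_ne_zero.mpr hd1)] using h4
  have hru : r ≫ u = 𝟙 T := by rw [hd, hd1, one_smul]
  exact ⟨⟨r, h, hru⟩, ⟨u, hru, h⟩⟩

lemma ext_smul_def {X Y : A} {n : ℕ} (c : k) (α : Abelian.Ext X Y n) :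
    c • α = α.comp (Abelian.Ext.mk₀ (c • 𝟙 Y)) (add_zero n) := rfl

end Aux

section Realize

set_option linter.unusedSectionVars false

variable {k : Type*} [Field k] {A : Type u} [Category.{v} A] [Abelian A]
  [CategoryTheory.Linear k A] [HasExt.{w} A]

variable (φ : ∀ X Y : A, (X ⟶ Y) ≃ₗ[k] Module.Dual k (Abelian.Ext Y X 1))
  (hφ₁ : ∀ ⦃X X' Y : A⦄ (f : X' ⟶ X) (u : X ⟶ Y) (e : Abelian.Ext Y X' 1),
      φ X' Y (f ≫ u) e = φ X Y u (e.comp (Abelian.Ext.mk₀ f) (add_zero 1)))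
  (hφ₂ : ∀ ⦃X Y Y' : A⦄ (u : X ⟶ Y) (g : Y ⟶ Y') (e : Abelian.Ext Y' X 1),
      φ X Y' (u ≫ g) e = φ X Y u ((Abelian.Ext.mk₀ g).comp e (zero_add 1)))

include hφ₂ in
lemma phi_left_id (X Y : A) (w : X ⟶ Y) (e : Abelian.Ext Y X 1) :
    φ X Y w e = φ X X (𝟙 X) ((Abelian.Ext.mk₀ w).comp e (zero_add 1)) := by
  have := hφ₂ (𝟙 X) w e
  rwa [Category.id_comp] at this

include hφ₁ in
lemma phi_right_id (X Y : A) (w : X ⟶ Y) (e : Abelian.Ext Y X 1) :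
    φ X Y w e = φ Y Y (𝟙 Y) (e.comp (Abelian.Ext.mk₀ w) (add_zero 1)) := by
  have := hφ₁ w (𝟙 Y) e
  rwa [Category.comp_id] at this

/-- Realization of a degree-zero Ext element as an actual morphism, characterized by its
pairing behaviour. -/
lemma realize_exists {X Y : A} (x : Abelian.Ext X Y 0) :
    ∃ v : X ⟶ Y, ∀ e : Abelian.Ext Y X 1,
      φ X Y v e = φ X X (𝟙 X) (x.comp e (zero_add 1)) := by
  refine ⟨(φ X Y).symm ⟨⟨fun e => φ X X (𝟙 X) (x.comp e (zero_add 1)), ?_⟩, ?_⟩, ?_⟩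
  · intro e e'
    show φ X X (𝟙 X) (x.comp (e + e') (zero_add 1)) =
      φ X X (𝟙 X) (x.comp e (zero_add 1)) + φ X X (𝟙 X) (x.comp e' (zero_add 1))
    rw [Abelian.Ext.comp_add, map_add]
  · intro c e
    show φ X X (𝟙 X) (x.comp (c • e) (zero_add 1)) = c • φ X X (𝟙 X) (x.comp e (zero_add 1))
    rw [ext_smul_def, ← Abelian.Ext.comp_assoc_of_third_deg_zero x e
      (Abelian.Ext.mk₀ (c • 𝟙 X)) (zero_add 1), ← ext_smul_def, map_smul]
  · intro e
    exact DFunLike.congr_fun ((φ X Y).apply_symm_apply _) e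

end Realize

section Subsing

set_option linter.unusedSectionVars false

variable {k : Type*} [Field k] {A : Type u} [Category.{v} A] [Abelian A]
  [CategoryTheory.Linear k A] [HasExt.{w} A]

lemma ext_subsingleton_of_hom_zero
    (hfin2 : ∀ X Y : A, FiniteDimensional k (Abelian.Ext X Y 1))
    (φ : ∀ X Y : A, (X ⟶ Y) ≃ₗ[k] Module.Dual k (Abelian.Ext Y X 1))
    {X Y : A} (h : ∀ χ : X ⟶ Y, χ = 0) :
    Subsingleton (Abelian.Ext Y X 1) := by
  haveI := hfin2 Y X
  haveI : Subsingleton (X ⟶ Y) := ⟨fun a b => (h a).trans (h b).symm⟩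
  haveI hd : Subsingleton (Module.Dual k (Abelian.Ext Y X 1)) :=
    (φ X Y).toEquiv.symm.subsingleton
  haveI : Subsingleton (Module.Dual k (Module.Dual k (Abelian.Ext Y X 1))) := by
    constructor
    intro a b
    ext x
    rw [Subsingleton.elim x 0, map_zero, map_zero]
  exact (Module.evalEquiv k (Abelian.Ext Y X 1)).toEquiv.subsingleton

end Subsing

section Crank

set_option linter.unusedSectionVars false
set_option maxHeartbeats 1000000

variable {k : Type*} [Field k] {A : Type u} [Category.{v} A] [Abelian A]
  [CategoryTheory.Linear k A] [HasExt.{w} A]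

/-- The core lemma: if `Z`, `T` are endo-simple, there is a nonzero map `Z ⟶ T`, a nonzero
map `g : T ⟶ U` killing all of `Hom(Z,T)` from the right, and a nonzero map `fP : P ⟶ Z`
killing all of `Hom(Z,T)` from the left, we get a contradiction in a 1-Calabi-Yau category. -/
lemma cy_crank
    (hfin1 : ∀ X Y : A, FiniteDimensional k (X ⟶ Y))
    (hfin2 : ∀ X Y : A, FiniteDimensional k (Abelian.Ext X Y 1))
    (φ : ∀ X Y : A, (X ⟶ Y) ≃ₗ[k] Module.Dual k (Abelian.Ext Y X 1))
    (hφ₁ : ∀ ⦃X X' Y : A⦄ (f : X' ⟶ X) (u : X ⟶ Y) (e : Abelian.Ext Y X' 1),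
        φ X' Y (f ≫ u) e = φ X Y u (e.comp (Abelian.Ext.mk₀ f) (add_zero 1)))
    (hφ₂ : ∀ ⦃X Y Y' : A⦄ (u : X ⟶ Y) (g : Y ⟶ Y') (e : Abelian.Ext Y' X 1),
        φ X Y' (u ≫ g) e = φ X Y u ((Abelian.Ext.mk₀ g).comp e (zero_add 1)))
    {Z T U P : A} (hZ : EndoSimple k Z) (hT : EndoSimple k T)
    {f0 : Z ⟶ T} (hf0 : f0 ≠ 0)
    {g : T ⟶ U} (hgne : g ≠ 0) (hg : ∀ u : Z ⟶ T, u ≫ g = 0)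
    {fP : P ⟶ Z} (hfPne : fP ≠ 0) (hfP : ∀ u : Z ⟶ T, fP ≫ u = 0) : False := by
  classical
  haveI := hfin1 Z T
  set m := Module.finrank k (Z ⟶ T) with hm
  let b : Module.Basis (Fin m) k (Z ⟶ T) := Module.finBasis k (Z ⟶ T)
  let Φ : (⨁ fun _ : Fin m => Z) ⟶ T := biproduct.desc fun j => b j
  have hfac : ∀ u : Z ⟶ T, ∃ cu : Z ⟶ ⨁ fun _ : Fin m => Z, cu ≫ Φ = u := by
    intro u
    refine ⟨biproduct.lift fun j => (b.repr u j) • 𝟙 Z, ?_⟩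
    rw [biproduct.lift_desc]
    simp only [Linear.smul_comp, Category.id_comp]
    exact b.sum_repr u
  let J := Limits.image Φ
  let ι : J ⟶ T := Limits.image.ι Φ
  let Φh : (⨁ fun _ : Fin m => Z) ⟶ J := Limits.factorThruImage Φ
  haveI hmono : Mono ι := inferInstanceAs (Mono (Limits.image.ι Φ))
  haveI hepi : Epi Φh := inferInstanceAs (Epi (Limits.factorThruImage Φ))
  have hΦfac : Φh ≫ ι = Φ := Limits.image.fac Φ
  let uh : Fin m → (Z ⟶ J) := fun j => biproduct.ι (fun _ : Fin m => Z) j ≫ Φh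
  have huh : ∀ j, uh j ≫ ι = b j := by
    intro j
    show (biproduct.ι (fun _ : Fin m => Z) j ≫ Φh) ≫ ι = b j
    rw [Category.assoc, hΦfac]
    simp [Φ]
  -- `ι ≫ g = 0`
  have hιg : ι ≫ g = 0 := by
    have h1 : Φh ≫ (ι ≫ g) = Φh ≫ 0 := by
      rw [comp_zero, ← Category.assoc, hΦfac]
      apply biproduct.hom_ext'
      intro j
      simp [Φ, hg (b j)]
    exact (cancel_epi Φh).1 h1
  -- `ι` is nonzero and not an isomorphism
  have hι0 : ι ≠ 0 := by
    intro h
    obtain ⟨cu, hcu⟩ := hfac f0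
    apply hf0
    have : f0 = (cu ≫ Φh) ≫ ι := by rw [Category.assoc, hΦfac, hcu]
    rw [this, h, comp_zero]
  have hιiso : ¬ IsIso ι := by
    intro h
    apply hgne
    calc g = inv ι ≫ (ι ≫ g) := by rw [IsIso.inv_hom_id_assoc]
    _ = 0 := by rw [hιg, comp_zero]
  -- every map `J ⟶ Z` is zero
  have hJZ : ∀ χ : J ⟶ Z, χ = 0 := by
    intro χ
    have hcomp : ∀ j : Fin m, uh j ≫ χ = 0 := by
      intro j
      obtain ⟨c, hc⟩ := hZ.exists_smul (uh j ≫ χ)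
      rcases eq_or_ne c 0 with h0 | h0
      · rw [hc, h0, zero_smul]
      · exfalso
        apply hfPne
        have h1 : (fP ≫ uh j) ≫ ι = 0 := by
          rw [Category.assoc, huh]
          exact hfP (b j)
        have h2 : fP ≫ uh j = 0 := zero_of_comp_mono ι h1
        have h3 : fP ≫ (uh j ≫ χ) = 0 := by rw [← Category.assoc, h2, zero_comp]
        rw [hc, Linear.comp_smul, Category.comp_id] at h3
        have h4 := congrArg (fun x => c⁻¹ • x) h3
        simpa [smul_smul, inv_mul_cancel₀ h0] using h4
    have hΦχ : Φh ≫ χ = Φh ≫ 0 := by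
      rw [comp_zero]
      apply biproduct.hom_ext'
      intro j
      rw [comp_zero, ← Category.assoc]
      exact hcomp j
    exact (cancel_epi Φh).1 hΦχ
  haveI hExtZJ : Subsingleton (Abelian.Ext Z J 1) := ext_subsingleton_of_hom_zero hfin2 φ hJZ
  -- the short exact sequence `J ⟶ T ⟶ C`
  let C := cokernel ι
  let π : T ⟶ C := cokernel.π ι
  let Sc : ShortComplex A := ShortComplex.mk ι π (cokernel.condition ι)
  have hSc : Sc.ShortExact :=
    { exact := Sc.exact_of_g_is_cokernel (cokernelIsCokernel ι)
      mono_f := hmono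
      epi_g := inferInstanceAs (Epi (cokernel.π ι)) }
  -- there is a nonzero map `θ : J ⟶ C`
  have hθ : ∃ θ : J ⟶ C, θ ≠ 0 := by
    by_contra h
    push_neg at h
    haveI : Subsingleton (Abelian.Ext C J 1) := ext_subsingleton_of_hom_zero hfin2 φ h
    have hx : hSc.extClass.comp (Abelian.Ext.mk₀ (𝟙 J)) (add_zero 1) = 0 :=
      Subsingleton.elim _ _
    obtain ⟨x₂, hx₂⟩ := Abelian.Ext.contravariant_sequence_exact₁ hSc J
      (Abelian.Ext.mk₀ (𝟙 J)) (by omega) hx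
    obtain ⟨r, hr⟩ := realize_exists φ x₂
    have hιr : ι ≫ r = 𝟙 J := by
      apply (φ J J).injective
      ext e
      rw [hφ₁ ι r e, hr, ← Abelian.Ext.comp_assoc_of_third_deg_zero x₂ e
        (Abelian.Ext.mk₀ ι) (zero_add 1),
        ← phi_right_id φ hφ₁ J T ι (x₂.comp e (zero_add 1)),
        phi_left_id φ hφ₂ J T ι (x₂.comp e (zero_add 1)),
        ← Abelian.Ext.comp_assoc_of_second_deg_zero (Abelian.Ext.mk₀ ι) x₂ e (zero_add 1),
        hx₂, Abelian.Ext.mk₀_id_comp]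
    obtain ⟨c, hc⟩ := hT.exists_smul (r ≫ ι)
    have hci : c • ι = ι := by
      have h1 : ι ≫ (r ≫ ι) = ι := by rw [← Category.assoc, hιr, Category.id_comp]
      rw [hc, Linear.comp_smul, Category.comp_id] at h1
      exact h1
    have hc1 : c = 1 := by
      by_contra hne
      apply hι0
      have h3 : (c - 1) • ι = 0 := by rw [sub_smul, one_smul, hci, sub_self]
      have h4 := congrArg (fun x => (c - 1)⁻¹ • x) h3
      simpa [smul_smul, inv_mul_cancel₀ (sub_ne_zero.mpr hne)] using h4
    exact hιiso ⟨r, hιr, by rw [hc, hc1, one_smul]⟩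
  obtain ⟨θ, hθ0⟩ := hθ
  -- some component of `Φh ≫ θ` is nonzero
  have hψex : ∃ j : Fin m, uh j ≫ θ ≠ 0 := by
    by_contra h
    push_neg at h
    apply hθ0
    have hΦθ : Φh ≫ θ = Φh ≫ 0 := by
      rw [comp_zero]
      apply biproduct.hom_ext'
      intro j
      rw [comp_zero, ← Category.assoc]
      exact h j
    exact (cancel_epi Φh).1 hΦθ
  obtain ⟨j0, hψ0⟩ := hψex
  set ψ : Z ⟶ C := uh j0 ≫ θ with hψdef
  -- the connecting class of `ψ` vanishes, so `ψ` lifts along `π`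
  have hδ : (Abelian.Ext.mk₀ ψ).comp hSc.extClass (zero_add 1) = 0 :=
    Subsingleton.elim _ _
  obtain ⟨x₂, hx₂⟩ := Abelian.Ext.covariant_sequence_exact₃ (X := Z) hSc
    (Abelian.Ext.mk₀ ψ) (by omega) hδ
  obtain ⟨v, hv⟩ := realize_exists φ x₂
  have hvπ : v ≫ π = ψ := by
    apply (φ Z C).injective
    ext e
    rw [hφ₂ v π e, hv, ← Abelian.Ext.comp_assoc_of_second_deg_zero x₂
      (Abelian.Ext.mk₀ π) e (zero_add 1), hx₂, ← phi_left_id φ hφ₂ Z C ψ e]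
  -- but `v` factors through `J`, hence `v ≫ π = 0`
  apply hψ0
  obtain ⟨cu, hcu⟩ := hfac v
  have hv0 : v ≫ π = 0 := by
    rw [← hcu, ← hΦfac, Category.assoc, Category.assoc]
    show cu ≫ Φh ≫ ι ≫ cokernel.π ι = 0
    rw [cokernel.condition, comp_zero, comp_zero]
  rw [← hvπ, hv0]

end Crank

section Reindex

set_option linter.unusedSectionVars false

variable {k : Type*} [Field k] {A : Type u} [Category.{v} A] [Abelian A]
  [CategoryTheory.Linear k A] [HasExt.{w} A]

lemma eq2z {X X' Y Y' : A} (e : X' = X) (e' : Y = Y') (x : X ⟶ Y) :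
    eqToHom e ≫ x ≫ eqToHom e' = 0 ↔ x = 0 := by
  subst e; subst e'; simp

lemma eq2i {X X' Y Y' : A} (e : X' = X) (e' : Y = Y') (x : X ⟶ Y) :
    IsIso (eqToHom e ≫ x ≫ eqToHom e') ↔ IsIso x := by
  subst e; subst e'; simp

lemma eqr_z {X Y Y' : A} (e' : Y = Y') (x : X ⟶ Y) :
    x ≫ eqToHom e' = 0 ↔ x = 0 := by
  subst e'; simp

lemma eqr_i {X Y Y' : A} (e' : Y = Y') (x : X ⟶ Y) :
    IsIso (x ≫ eqToHom e') ↔ IsIso x := by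
  subst e'; simp

lemma isIso_smul_id {X : A} {c : k} (hc : c ≠ 0) : IsIso (c • 𝟙 X) := by
  refine ⟨c⁻¹ • 𝟙 X, ?_, ?_⟩
  · rw [Linear.smul_comp, Category.id_comp, smul_smul, mul_inv_cancel₀ hc, one_smul]
  · rw [Linear.smul_comp, Category.id_comp, smul_smul, inv_mul_cancel₀ hc, one_smul]

/-- Removing one vertex from a cycle, given a replacing edge `w : S 0 ⟶ S 2`. The new cycle
visits the old vertices `2, 3, …, n-1, 0`. -/
lemma remove_vertex {n : ℕ} (hn : 2 ≤ n) (S : Fin n → A)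
    (f : ∀ i : Fin n, S i ⟶ S ⟨(i.val + 1) % n, Nat.mod_lt _ (by omega)⟩)
    (hES : ∀ i, EndoSimple k (S i))
    (hne : ∀ i, f i ≠ 0) (hniso : ∀ i, ¬ IsIso (f i))
    (w : S ⟨0, by omega⟩ ⟶ S ⟨2 % n, Nat.mod_lt _ (by omega)⟩)
    (hw0 : w ≠ 0) (hwiso : ¬ IsIso w) :
    ∃ (S' : Fin (n-1) → A)
      (f' : ∀ i : Fin (n-1), S' i ⟶ S' ⟨(i.val + 1) % (n-1), Nat.mod_lt _ (by omega)⟩),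
      (∀ i, EndoSimple k (S' i)) ∧ (∀ i, f' i ≠ 0) ∧ (∀ i, ¬ IsIso (f' i)) := by
  have hm : 0 < n - 1 := by omega
  set m := n - 1 with hmdef
  have hmn : m < n := by omega
  let emb : Fin m → Fin n := fun j => ⟨(j.val + 2) % n, Nat.mod_lt _ (by omega)⟩
  have key1 : ∀ j : Fin m, j.val = m - 1 → emb j = (⟨0, by omega⟩ : Fin n) := by
    intro j h
    apply Fin.ext
    show (j.val + 2) % n = 0
    have : j.val + 2 = n := by omega
    rw [this, Nat.mod_self]
  have key2 : ∀ j : Fin m, j.val = m - 1 →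
      (⟨2 % n, Nat.mod_lt _ (by omega)⟩ : Fin n) = emb ⟨(j.val + 1) % m, Nat.mod_lt _ hm⟩ := by
    intro j h
    apply Fin.ext
    show 2 % n = ((j.val + 1) % m + 2) % n
    have e1 : (j.val + 1) % m = 0 := by
      have : j.val + 1 = m := by omega
      rw [this, Nat.mod_self]
    rw [e1]
  have key3 : ∀ j : Fin m, ¬ (j.val = m - 1) →
      (⟨((j.val + 2) % n + 1) % n, Nat.mod_lt _ (by omega)⟩ : Fin n)
        = emb ⟨(j.val + 1) % m, Nat.mod_lt _ hm⟩ := by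
    intro j h
    apply Fin.ext
    show ((j.val + 2) % n + 1) % n = ((j.val + 1) % m + 2) % n
    have e1 : (j.val + 1) % m = j.val + 1 := Nat.mod_eq_of_lt (by omega)
    rw [Nat.mod_add_mod, e1, show j.val + 2 + 1 = j.val + 1 + 2 by omega]
  let f' : ∀ j : Fin m, S (emb j) ⟶ S (emb ⟨(j.val + 1) % m, Nat.mod_lt _ hm⟩) :=
    fun j =>
      if h : j.val = m - 1 then
        eqToHom (congrArg S (key1 j h)) ≫ w ≫ eqToHom (congrArg S (key2 j h))
      else
        f (emb j) ≫ eqToHom (congrArg S (key3 j h))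
  have hf'def : ∀ j, f' j =
      if h : j.val = m - 1 then
        eqToHom (congrArg S (key1 j h)) ≫ w ≫ eqToHom (congrArg S (key2 j h))
      else
        f (emb j) ≫ eqToHom (congrArg S (key3 j h)) := fun j => rfl
  refine ⟨fun j => S (emb j), f', fun j => hES (emb j), ?_, ?_⟩
  · intro j
    rw [hf'def j]
    by_cases h : j.val = m - 1
    · rw [dif_pos h]
      exact fun hz => hw0 ((eq2z _ _ w).1 hz)
    · rw [dif_neg h]
      exact fun hz => hne (emb j) ((eqr_z _ _).1 hz)
  · intro j
    rw [hf'def j]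
    by_cases h : j.val = m - 1
    · rw [dif_pos h, eq2i]
      exact hwiso
    · rw [dif_neg h, eqr_i]
      exact hniso (emb j)

end Reindex

section MainInduction

set_option linter.unusedSectionVars false
set_option maxHeartbeats 1000000

variable {k : Type*} [Field k] {A : Type u} [Category.{v} A] [Abelian A]
  [CategoryTheory.Linear k A] [HasExt.{w} A]

lemma no_cycle_aux
    (hfin1 : ∀ X Y : A, FiniteDimensional k (X ⟶ Y))
    (hfin2 : ∀ X Y : A, FiniteDimensional k (Abelian.Ext X Y 1))
    (φ : ∀ X Y : A, (X ⟶ Y) ≃ₗ[k] Module.Dual k (Abelian.Ext Y X 1))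
    (hφ₁ : ∀ ⦃X X' Y : A⦄ (f : X' ⟶ X) (u : X ⟶ Y) (e : Abelian.Ext Y X' 1),
        φ X' Y (f ≫ u) e = φ X Y u (e.comp (Abelian.Ext.mk₀ f) (add_zero 1)))
    (hφ₂ : ∀ ⦃X Y Y' : A⦄ (u : X ⟶ Y) (g : Y ⟶ Y') (e : Abelian.Ext Y' X 1),
        φ X Y' (u ≫ g) e = φ X Y u ((Abelian.Ext.mk₀ g).comp e (zero_add 1))) :
    ∀ (n : ℕ) (hn : 1 ≤ n) (S : Fin n → A)
      (f : ∀ i : Fin n, S i ⟶ S ⟨(i.val + 1) % n, Nat.mod_lt _ (Nat.lt_of_lt_of_le Nat.one_pos hn)⟩),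
      (∀ i, EndoSimple k (S i)) → (∀ i, f i ≠ 0) → (∀ i, ¬ IsIso (f i)) → False := by
  intro n
  induction n using Nat.strong_induction_on with
  | _ n IH =>
  intro hn S f hES hne hniso
  rcases eq_or_lt_of_le hn with h1 | h2
  · -- base case `n = 1`
    subst h1
    have i0 : Fin 1 := ⟨0, Nat.one_pos⟩
    obtain ⟨c, hc⟩ := (hES ⟨0, Nat.one_pos⟩).exists_smul
      (f ⟨0, Nat.one_pos⟩ : S ⟨0, Nat.one_pos⟩ ⟶ S ⟨0, Nat.one_pos⟩)
    rcases eq_or_ne c 0 with h0 | h0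
    · exact hne ⟨0, Nat.one_pos⟩ (by rw [hc, h0, zero_smul])
    · exact hniso ⟨0, Nat.one_pos⟩ (by rw [hc]; exact isIso_smul_id h0)
  · -- inductive case, `2 ≤ n`
    have hn2 : 2 ≤ n := h2
    have hn0 : 0 < n := by omega
    let i0 : Fin n := ⟨0, hn0⟩
    let i1 : Fin n := ⟨1 % n, Nat.mod_lt _ hn0⟩
    let i2 : Fin n := ⟨(1 % n + 1) % n, Nat.mod_lt _ hn0⟩
    let il : Fin n := ⟨n - 1, by omega⟩
    have eL : (⟨(il.val + 1) % n, Nat.mod_lt _ hn0⟩ : Fin n) = i0 := by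
      apply Fin.ext
      show (n - 1 + 1) % n = 0
      rw [show n - 1 + 1 = n by omega, Nat.mod_self]
    let fL : S il ⟶ S i0 := f il ≫ eqToHom (congrArg S eL)
    have hfL0 : fL ≠ 0 := fun hz => hne il ((eqr_z _ _).1 hz)
    by_cases hA : ∀ u : S i0 ⟶ S i1, u ≫ f i1 = 0
    · by_cases hB : ∀ u : S i0 ⟶ S i1, fL ≫ u = 0
      · -- neither shortening possible: apply the Calabi-Yau crank
        exact cy_crank hfin1 hfin2 φ hφ₁ hφ₂ (hES i0) (hES i1)
          (hne i0) (hne i1) hA hfL0 hB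
      · -- case B : shorten the cycle using `fL ≫ u`, after rotating by `n - 1`
        push_neg at hB
        obtain ⟨u, hu⟩ := hB
        let r := n - 1
        have hr : r = n - 1 := rfl
        let S2 : Fin n → A := fun j => S ⟨(j.val + r) % n, Nat.mod_lt _ hn0⟩
        have keyr : ∀ j : Fin n,
            (⟨((j.val + r) % n + 1) % n, Nat.mod_lt _ hn0⟩ : Fin n)
              = ⟨((j.val + 1) % n + r) % n, Nat.mod_lt _ hn0⟩ := by
          intro j
          apply Fin.ext
          show ((j.val + r) % n + 1) % n = ((j.val + 1) % n + r) % n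
          rw [Nat.mod_add_mod, Nat.mod_add_mod,
            show j.val + r + 1 = j.val + 1 + r by omega]
        let f2 : ∀ j : Fin n, S2 j ⟶ S2 ⟨(j.val + 1) % n, Nat.mod_lt _ (by omega)⟩ :=
          fun j => f ⟨(j.val + r) % n, Nat.mod_lt _ hn0⟩ ≫ eqToHom (congrArg S (keyr j))
        have hES2 : ∀ j, EndoSimple k (S2 j) := fun j => hES _
        have hne2 : ∀ j, f2 j ≠ 0 := fun j hz => hne _ ((eqr_z _ _).1 hz)
        have hniso2 : ∀ j, ¬ IsIso (f2 j) := fun j hz => hniso _ ((eqr_i _ _).1 hz)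
        have ea : (⟨(0 + r) % n, Nat.mod_lt _ hn0⟩ : Fin n) = il := by
          apply Fin.ext
          show (0 + r) % n = n - 1
          rw [Nat.zero_add]
          exact Nat.mod_eq_of_lt (by omega)
        have eb : i1 = (⟨(2 % n + r) % n, Nat.mod_lt _ hn0⟩ : Fin n) := by
          apply Fin.ext
          show 1 % n = (2 % n + r) % n
          rw [Nat.mod_add_mod, show 2 + r = n + 1 by omega, Nat.add_mod_left]
        let w : S2 (⟨0, by omega⟩ : Fin n) ⟶ S2 ⟨2 % n, Nat.mod_lt _ (by omega)⟩ :=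
          eqToHom (congrArg S ea) ≫ (fL ≫ u) ≫ eqToHom (congrArg S eb)
        have hw0' : w ≠ 0 := fun hz => hu ((eq2z _ _ _).1 hz)
        have hwiso' : ¬ IsIso w := by
          intro hiso
          have hfu : IsIso (fL ≫ u) := (eq2i _ _ _).1 hiso
          have hcomp : fL ≫ (u ≫ inv (fL ≫ u)) = 𝟙 (S il) := by
            rw [← Category.assoc, IsIso.hom_inv_id]
          have hfLiso := (isIso_of_comp_eq_id (hES il) (hES i0) hcomp).1
          exact hniso il ((eqr_i _ _).1 hfLiso)
        obtain ⟨S', f', hES', hne', hniso'⟩ :=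
          remove_vertex hn2 S2 f2 hES2 hne2 hniso2 w hw0' hwiso'
        exact IH (n - 1) (by omega) (by omega) S' f' hES' hne' hniso'
    · -- case A : shorten the cycle using `u ≫ f i1`
      push_neg at hA
      obtain ⟨u, hu⟩ := hA
      have hw0iso : ¬ IsIso (u ≫ f i1) := by
        intro hiso
        have hcomp : (inv (u ≫ f i1) ≫ u) ≫ f i1 = 𝟙 (S i2) := by
          rw [Category.assoc, IsIso.inv_hom_id]
        exact hniso i1 (isIso_of_comp_eq_id (hES i2) (hES i1) hcomp).2
      have e2 : i2 = (⟨2 % n, Nat.mod_lt _ hn0⟩ : Fin n) := by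
        apply Fin.ext
        show (1 % n + 1) % n = 2 % n
        rw [Nat.mod_eq_of_lt (show 1 < n by omega)]
      let w : S (⟨0, by omega⟩ : Fin n) ⟶ S ⟨2 % n, Nat.mod_lt _ (by omega)⟩ :=
        (u ≫ f i1) ≫ eqToHom (congrArg S e2)
      have hw0 : w ≠ 0 := fun hz => hu ((eqr_z _ _).1 hz)
      have hwiso : ¬ IsIso w := fun hiso => hw0iso ((eqr_i _ _).1 hiso)
      obtain ⟨S', f', hES', hne', hniso'⟩ :=
        remove_vertex hn2 S f hES hne hniso w hw0 hwiso
      exact IH (n - 1) (by omega) (by omega) S' f' hES' hne' hniso'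

end MainInduction

/-- In a 1-Calabi-Yau category the endo-simple objects form a directed family:
there is no cycle `S_0 → S_1 → ⋯ → S_{n-1} → S_0` of nonzero non-isomorphisms between
endo-simple objects. -/
theorem no_cycle_of_endoSimples
    {k : Type*} [Field k] [IsAlgClosed k] {A : Type u} [Category.{v} A] [Abelian A]
    [CategoryTheory.Linear k A] [HasExt.{w} A]
    (hCY : IsOneCalabiYau k A) :
    ∀ (n : ℕ) (hn : 1 ≤ n) (S : Fin n → A)
      (f : ∀ i : Fin n, S i ⟶ S ⟨(i.val + 1) % n, Nat.mod_lt _ (by omega)⟩),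
      (∀ i, EndoSimple k (S i)) → (∀ i, f i ≠ 0) → (∀ i, ¬ IsIso (f i)) → False := by
  obtain ⟨hfin1, hfin2, hvan, φ, hφ₁, hφ₂⟩ := hCY
  intro n hn S f hES hne hniso
  exact no_cycle_aux hfin1 hfin2 φ hφ₁ hφ₂ n hn S f hES hne hniso
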